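/- Let A ⊆ ℂ be a nonempty closed set and let Φ = A + [0,∞) = {a + t : a ∈ A, t ≥ 0}. If diam(A) ≤ δ then for every λ ∉ Φ, dist(λ, conv(Φ)) ≥ dist(λ, Φ) - δ. -/

import Mathlib

open Pointwise
set_option maxHeartbeats 1000000 in


lemma aux_le_infDist (s : Set ℂ) (x : ℂ) (b : ℝ) (hne : s.Nonempty)
    (key : ∀ z ∈ s, b ≤ dist x z) : b ≤ Metric.infDist x s := by
  rw [Metric.infDist_eq_iInf]
  have : Nonempty s := hne.to_subtype
  exact le_ciInf fun y => key y.1 y.2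

/-- If A ⊆ ℂ is nonempty, closed and bounded with diam(A) ≤ δ and
Φ = A + [0,∞), then for λ ∉ Φ, dist(λ, conv Φ) ≥ dist(λ, Φ) - δ. -/
theorem stmt_17 (A : Set ℂ) (hA : A.Nonempty) (hAc : IsClosed A)
    (hAb : Bornology.IsBounded A) (δ : ℝ) (hδ : Metric.diam A ≤ δ)
    (Φ : Set ℂ) (hΦ : Φ = {z | ∃ a ∈ A, ∃ t : ℝ, 0 ≤ t ∧ z = a + t})
    (lam : ℂ) (hlam : lam ∉ Φ) :
    Metric.infDist lam Φ - δ ≤ Metric.infDist lam (convexHull ℝ Φ) := by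
  obtain ⟨a₀, ha₀⟩ := hA
  set C : Set ℂ := convexHull ℝ A + (Complex.ofReal '' Set.Ici (0:ℝ)) with hC
  have himg : Convex ℝ (Complex.ofReal '' Set.Ici (0:ℝ)) := by
    rintro x ⟨s, hs, rfl⟩ y ⟨t, ht, rfl⟩ a b ha hb hab
    refine ⟨a * s + b * t, add_nonneg (mul_nonneg ha hs) (mul_nonneg hb ht), ?_⟩
    simp only [Complex.real_smul]
    push_cast
    ring
  have hCconv : Convex ℝ C := (convex_convexHull ℝ A).add himg
  have hsub : convexHull ℝ Φ ⊆ C := by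
    apply convexHull_min _ hCconv
    intro z hz
    rw [hΦ] at hz
    obtain ⟨a, ha, t, ht, rfl⟩ := hz
    exact Set.add_mem_add (subset_convexHull ℝ A ha) ⟨t, ht, rfl⟩
  have key : ∀ z ∈ convexHull ℝ Φ, Metric.infDist lam Φ - δ ≤ dist lam z := by
    intro z hz
    obtain ⟨c, hc, w, ⟨t, ht, rfl⟩, rfl⟩ := hsub hz
    have hcball : c ∈ Metric.closedBall a₀ δ := by
      have hsub2 : A ⊆ Metric.closedBall a₀ δ := fun a ha => by
        simp only [Metric.mem_closedBall]
        exact le_trans (Metric.dist_le_diam_of_mem hAb ha ha₀) hδ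
      exact convexHull_min hsub2 (convex_closedBall _ _) hc
    have hw : (a₀ + t : ℂ) ∈ Φ := by rw [hΦ]; exact ⟨a₀, ha₀, t, ht, rfl⟩
    have h1 : Metric.infDist lam Φ ≤ dist lam (c + (t:ℂ)) + δ := by
      calc Metric.infDist lam Φ ≤ dist lam (a₀ + t) := Metric.infDist_le_dist_of_mem hw
        _ ≤ dist lam (c + (t:ℂ)) + dist (c + (t:ℂ)) (a₀ + t) := dist_triangle _ _ _
        _ ≤ dist lam (c + (t:ℂ)) + δ := by
            have heq : dist (c + (t:ℂ)) (a₀ + (t:ℂ)) = dist c a₀ := by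
              rw [dist_eq_norm, dist_eq_norm]; ring_nf
            rw [heq]; linarith [Metric.mem_closedBall.mp hcball]
    linarith
  have hne : (convexHull ℝ Φ).Nonempty := by
    refine ⟨a₀, subset_convexHull ℝ Φ ?_⟩
    rw [hΦ]; exact ⟨a₀, ha₀, 0, le_refl 0, by simp⟩
  exact aux_le_infDist _ _ _ hne key
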